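/- If a sequence (ā_i b̄_i : i ∈ ℤ) in a sufficiently saturated structure C is order-indiscernible and witnesses the order property for ψ(x̄; ȳ) := ∃z φ(x̄; ȳ; z) (i.e., C ⊨ ψ(ā_i, b̄_j) ⟺ i < j), and if for every n ≥ 1, C ⊨ ∃z ⋀_{j=1}^n φ(ā_0, b̄_j, z), then the formula φ(x̄z; ȳ) (with z moved to the left variables) has the order property in Th(C). -/

import Mathlib

open FirstOrder Language

/-- in a sufficiently saturated structure `C`, if `(ā_i b̄_i : i ∈ ℤ)` is
order-indiscernible and witnesses the order property for `ψ(x̄; ȳ) = ∃z φ(x̄; ȳ; z)`, and if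
for every `n ≥ 1` we have `C ⊨ ∃z ⋀_{j=1}^n φ(ā₀, b̄_j, z)`, then `φ(x̄z; ȳ)` has the order
property (witnessed in `C`, hence in `Th(C)`). -/
theorem op_shift_left {L : FirstOrder.Language.{u, v}} {C : Type w} [L.Structure C]
    (ka kb : ℕ) (φ : L.Formula (Fin ka ⊕ (Fin kb ⊕ Unit)))
    (a : ℤ → Fin ka → C) (b : ℤ → Fin kb → C)
    -- `(ā_i b̄_i)` is order-indiscernible:
    (hind : ∀ (n : ℕ) (g h : Fin n → ℤ), StrictMono g → StrictMono h →
      ∀ ψ : L.Formula (Fin n × (Fin ka ⊕ Fin kb)),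
        ((ψ.Realize fun q => Sum.elim (a (g q.1)) (b (g q.1)) q.2) ↔
          (ψ.Realize fun q => Sum.elim (a (h q.1)) (b (h q.1)) q.2)))
    -- the sequence witnesses the order property for `∃z φ`:
    (hop : ∀ i j : ℤ,
      (∃ z : C, φ.Realize (Sum.elim (a i) (Sum.elim (b j) fun _ => z))) ↔ i < j)
    -- for every `n ≥ 1`, `C ⊨ ∃z ⋀_{j=1}^n φ(ā₀, b̄_j, z)`:
    (hcof : ∀ n : ℕ, 1 ≤ n → ∃ z : C, ∀ j : Fin n,
      φ.Realize (Sum.elim (a 0) (Sum.elim (b ((j : ℤ) + 1)) fun _ => z)))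
    -- `C` is sufficiently saturated: every countable, finitely satisfiable set of formulas in
    -- one variable with countably many parameters from `C` is realized in `C`:
    (hsat : ∀ (v : ℕ → C) (Φ : ℕ → L.Formula (ℕ ⊕ Unit)),
      (∀ s : Finset ℕ, ∃ z : C, ∀ i ∈ s, (Φ i).Realize (Sum.elim v fun _ => z)) →
        ∃ z : C, ∀ i, (Φ i).Realize (Sum.elim v fun _ => z)) :
    -- then `φ(x̄z; ȳ)` has the order property, witnessed by `(ā_i c_i)` and `(b̄_j)`:
    ∃ c : ℤ → C, ∀ i j : ℤ,
      φ.Realize (Sum.elim (a i) (Sum.elim (b j) fun _ => c i)) ↔ i < j := by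
  obtain ⟨z₀, -⟩ := hcof 1 le_rfl
  -- Key: for every `i` and `N ≥ 1`, there is `z` with `φ(a_i, b_{i+1+k}, z)` for `k < N`.
  have key : ∀ (i : ℤ) (N : ℕ), 1 ≤ N → ∃ z : C, ∀ k : Fin N,
      φ.Realize (Sum.elim (a i) (Sum.elim (b (i + 1 + (k : ℤ))) fun _ => z)) := by
    intro i N hN
    set f : Fin N → (Fin ka ⊕ (Fin kb ⊕ Unit)) → (Fin (N+1) × (Fin ka ⊕ Fin kb)) ⊕ Fin 1 :=
      fun k => Sum.elim (fun p => Sum.inl (0, Sum.inl p))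
        (Sum.elim (fun q => Sum.inl (k.succ, Sum.inr q)) (fun _ => Sum.inr 0)) with hf
    set ψ : L.Formula (Fin (N+1) × (Fin ka ⊕ Fin kb)) :=
      (BoundedFormula.iInf fun k : Fin N =>
        (BoundedFormula.relabel (f k) φ : L.BoundedFormula _ 1)).ex with hψ
    have hreal : ∀ x : Fin (N+1) → ℤ,
        (ψ.Realize fun q => Sum.elim (a (x q.1)) (b (x q.1)) q.2) ↔
          ∃ z : C, ∀ k : Fin N,
            φ.Realize (Sum.elim (a (x 0)) (Sum.elim (b (x k.succ)) fun _ => z)) := by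
      intro x
      simp only [hψ, Formula.Realize, BoundedFormula.realize_ex, BoundedFormula.realize_iInf,
        Finset.mem_univ, true_implies]
      refine exists_congr fun z => forall_congr' fun k => ?_
      rw [BoundedFormula.realize_relabel]
      have hcomp : ((Sum.elim (fun q : Fin (N+1) × (Fin ka ⊕ Fin kb) =>
            Sum.elim (a (x q.1)) (b (x q.1)) q.2)
            ((Fin.snoc default z : Fin 1 → C) ∘ Fin.castAdd 0)) ∘ f k)
          = Sum.elim (a (x 0)) (Sum.elim (b (x k.succ)) fun _ => z) := by
        funext w
        rcases w with p | w
        · simp [hf]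
        · rcases w with q | u
          · simp [hf]
          · simp [hf, Fin.snoc]
      rw [hcomp]
      exact iff_of_eq (congrArg _ (Subsingleton.elim _ _))
    set g : Fin (N+1) → ℤ := fun m => if (m : ℕ) = 0 then i else i + (m : ℤ) with hg
    have hgmono : StrictMono g := by
      intro m1 m2 hlt
      have hlt' : (m1 : ℕ) < (m2 : ℕ) := hlt
      simp only [hg]
      rcases Nat.eq_zero_or_pos (m1 : ℕ) with h0 | h0
      · rw [if_pos h0, if_neg (by omega)]
        have : (0 : ℤ) < ((m2 : ℕ) : ℤ) := by exact_mod_cast Nat.pos_of_ne_zero (by omega)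
        omega
      · rw [if_neg (by omega), if_neg (by omega)]
        have : ((m1 : ℕ) : ℤ) < ((m2 : ℕ) : ℤ) := by exact_mod_cast hlt'
        omega
    have hhmono : StrictMono (fun m : Fin (N+1) => ((m : ℕ) : ℤ)) := by
      intro m1 m2 hlt
      have hlt' : (m1 : ℕ) < (m2 : ℕ) := hlt
      show ((m1 : ℕ) : ℤ) < ((m2 : ℕ) : ℤ)
      exact_mod_cast hlt'
    have hiff0 := hind (N+1) g (fun m : Fin (N+1) => ((m : ℕ) : ℤ)) hgmono hhmono ψ
    have hiff : (∃ z : C, ∀ k : Fin N,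
          φ.Realize (Sum.elim (a (g 0)) (Sum.elim (b (g k.succ)) fun _ => z))) ↔
        ∃ z : C, ∀ k : Fin N,
          φ.Realize (Sum.elim (a (((0 : Fin (N+1)) : ℕ) : ℤ))
            (Sum.elim (b (((k.succ : Fin (N+1)) : ℕ) : ℤ)) fun _ => z)) :=
      (hreal g).symm.trans (hiff0.trans (hreal fun m => ((m : ℕ) : ℤ)))
    have hside : ∃ z : C, ∀ k : Fin N,
        φ.Realize (Sum.elim (a (((0 : Fin (N+1)) : ℕ) : ℤ))
          (Sum.elim (b (((k.succ : Fin (N+1)) : ℕ) : ℤ)) fun _ => z)) := by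
      obtain ⟨z, hz⟩ := hcof N hN
      refine ⟨z, fun k => ?_⟩
      have h1 : (((0 : Fin (N+1)) : ℕ) : ℤ) = 0 := by simp
      have h2 : (((k.succ : Fin (N+1)) : ℕ) : ℤ) = (k : ℤ) + 1 := by
        simp [Fin.val_succ]
      rw [h1, h2]
      exact hz k
    obtain ⟨z, hz⟩ := hiff.mpr hside
    refine ⟨z, fun k => ?_⟩
    have hg0 : g 0 = i := by simp [hg]
    have hgs : g k.succ = i + 1 + (k : ℤ) := by
      simp only [hg, Fin.val_succ]
      rw [if_neg (by omega)]
      push_cast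
      ring
    have h' := hz k
    rwa [hg0, hgs] at h' 
  -- Main: for every `i`, there is a single `z` working for all `n` simultaneously.
  have main : ∀ i : ℤ, ∃ z : C, ∀ n : ℕ,
      φ.Realize (Sum.elim (a i) (Sum.elim (b (i + 1 + (n : ℤ))) fun _ => z)) := by
    intro i
    set v : ℕ → C := fun m =>
      if h : m < ka then a i ⟨m, h⟩
      else if h2 : (m - ka) % kb < kb then
        b (i + 1 + (((m - ka) / kb : ℕ) : ℤ)) ⟨(m - ka) % kb, h2⟩
      else z₀ with hv
    set F : ℕ → (Fin ka ⊕ (Fin kb ⊕ Unit)) → ℕ ⊕ Unit := fun n =>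
      Sum.elim (fun p => Sum.inl (p : ℕ))
        (Sum.elim (fun q => Sum.inl (ka + (kb * n + (q : ℕ)))) fun _ => Sum.inr ()) with hF
    have hcomp : ∀ (n : ℕ) (z : C),
        (Sum.elim v fun _ => z) ∘ F n
          = Sum.elim (a i) (Sum.elim (b (i + 1 + (n : ℤ))) fun _ => z) := by
      intro n z
      funext w
      rcases w with p | w
      · simp [hF, hv, p.isLt]
      · rcases w with q | u
        · have hkb : 0 < kb := q.pos
          have h1 : ¬ (ka + (kb * n + (q : ℕ)) < ka) := by omega
          have h2 : ka + (kb * n + (q : ℕ)) - ka = kb * n + (q : ℕ) := by omega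
          have hm : (kb * n + (q : ℕ)) % kb = (q : ℕ) := by
            rw [Nat.add_comm, Nat.add_mul_mod_self_left, Nat.mod_eq_of_lt q.isLt]
          have hd : (kb * n + (q : ℕ)) / kb = n := by
            rw [Nat.mul_add_div hkb, Nat.div_eq_of_lt q.isLt]
            omega
          simp only [hF, Function.comp_apply, Sum.elim_inl, Sum.elim_inr, hv]
          rw [dif_neg h1]
          simp only [h2, hm, hd]
          rw [dif_pos q.isLt]
        · simp [hF, hv]
    set Φ : ℕ → L.Formula (ℕ ⊕ Unit) := fun n => φ.relabel (F n) with hΦ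
    have hfin : ∀ s : Finset ℕ, ∃ z : C, ∀ n ∈ s, (Φ n).Realize (Sum.elim v fun _ => z) := by
      intro s
      obtain ⟨z, hz⟩ := key i (s.sup id + 1) (by omega)
      refine ⟨z, fun n hn => ?_⟩
      have hlt : n < s.sup id + 1 := Nat.lt_succ_of_le (Finset.le_sup (f := id) hn)
      rw [hΦ, Formula.realize_relabel, hcomp n z]
      have := hz ⟨n, hlt⟩
      simpa using this
    obtain ⟨z, hz⟩ := hsat v Φ hfin
    refine ⟨z, fun n => ?_⟩
    have := hz n
    rwa [hΦ, Formula.realize_relabel, hcomp n z] at this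
  choose c hc using main
  refine ⟨c, fun i j => ?_⟩
  constructor
  · intro h
    exact (hop i j).mp ⟨c i, h⟩
  · intro hij
    have hn : i + 1 + ((j - (i + 1)).toNat : ℤ) = j := by omega
    have := hc i (j - (i + 1)).toNat
    rwa [hn] at this
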